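/- In the reflection algebra B(g_N), comparing coefficients of u^{-1} v^{-1} in the reflection equation yields the relation S_1 S_2 - S_2 S_1 = 2 S_1 (P - Q) - 2 (P - Q) S_1, where S = [s_{ij}^{(1)}] is the matrix of first-order generators. Consequently, the assignment F_{ij} ↦ (1/4)(s_{ij}^{(1)} - s'^{(1)}_{ij}) defines an algebra homomorphism U(g_N) → B(g_N), where S' = G S^t G^{-1}. -/

import Mathlib

open Matrix
open scoped Kronecker BigOperators

noncomputable section

/-- The permutation operator `P = Σ_{i,j} e_{ij} ⊗ e_{ji}` on `ℂ^N ⊗ ℂ^N`. -/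
def Pop (N : ℕ) : Matrix (Fin N × Fin N) (Fin N × Fin N) ℂ :=
  ∑ i : Fin N, ∑ j : Fin N,
    (Matrix.single i j (1 : ℂ)) ⊗ₖ (Matrix.single j i (1 : ℂ))

/-- The partial transpose `P^t = Σ_{i,j} e_{ij} ⊗ e_{ij}`. -/
def Ptop (N : ℕ) : Matrix (Fin N × Fin N) (Fin N × Fin N) ℂ :=
  ∑ i : Fin N, ∑ j : Fin N,
    (Matrix.single i j (1 : ℂ)) ⊗ₖ (Matrix.single i j (1 : ℂ))

/-- `Q = G₁ P^t G₁⁻¹`. -/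
def Qop (N : ℕ) (G : Matrix (Fin N) (Fin N) ℂ) : Matrix (Fin N × Fin N) (Fin N × Fin N) ℂ :=
  (G ⊗ₖ (1 : Matrix (Fin N) (Fin N) ℂ)) * Ptop N * (G⁻¹ ⊗ₖ (1 : Matrix (Fin N) (Fin N) ℂ))

variable {N : ℕ} {A : Type*}

/-- Embedding `M ↦ M ⊗ 1` of an `A`-valued matrix into the first tensor factor. -/
def emb1 [Ring A] (M : Matrix (Fin N) (Fin N) A) :
    Matrix (Fin N × Fin N) (Fin N × Fin N) A :=
  Matrix.of fun p q => if p.2 = q.2 then M p.1 q.1 else 0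

/-- Embedding `M ↦ 1 ⊗ M` of an `A`-valued matrix into the second tensor factor. -/
def emb2 [Ring A] (M : Matrix (Fin N) (Fin N) A) :
    Matrix (Fin N × Fin N) (Fin N × Fin N) A :=
  Matrix.of fun p q => if p.1 = q.1 then M p.2 q.2 else 0

set_option linter.unusedSectionVars false
set_option maxHeartbeats 1000000

section AuxiliaryLemmasForProof

section EmbMul
variable [Ring A]

lemma emb1_apply (M : Matrix (Fin N) (Fin N) A) (p q) :
    emb1 M p q = if p.2 = q.2 then M p.1 q.1 else 0 := rfl

lemma emb2_apply (M : Matrix (Fin N) (Fin N) A) (p q) :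
    emb2 M p q = if p.1 = q.1 then M p.2 q.2 else 0 := rfl

lemma emb1_mul_apply (M : Matrix (Fin N) (Fin N) A)
    (D : Matrix (Fin N × Fin N) (Fin N × Fin N) A) (p q) :
    (emb1 M * D) p q = ∑ k, M p.1 k * D (k, p.2) q := by
  rw [Matrix.mul_apply, Fintype.sum_prod_type]
  simp [emb1_apply, ite_mul, Finset.sum_ite_eq]

lemma mul_emb1_apply (M : Matrix (Fin N) (Fin N) A)
    (D : Matrix (Fin N × Fin N) (Fin N × Fin N) A) (p q) :
    (D * emb1 M) p q = ∑ k, D p (k, q.2) * M k q.1 := by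
  rw [Matrix.mul_apply, Fintype.sum_prod_type]
  simp [emb1_apply, mul_ite, Finset.sum_ite_eq', Finset.sum_comm (γ := Fin N)]

lemma emb2_mul_apply (M : Matrix (Fin N) (Fin N) A)
    (D : Matrix (Fin N × Fin N) (Fin N × Fin N) A) (p q) :
    (emb2 M * D) p q = ∑ c, M p.2 c * D (p.1, c) q := by
  rw [Matrix.mul_apply, Fintype.sum_prod_type]
  simp [emb2_apply, ite_mul, Finset.sum_ite_eq]

lemma mul_emb2_apply (M : Matrix (Fin N) (Fin N) A)
    (D : Matrix (Fin N × Fin N) (Fin N × Fin N) A) (p q) :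
    (D * emb2 M) p q = ∑ c, D p (q.1, c) * M c q.2 := by
  rw [Matrix.mul_apply, Fintype.sum_prod_type]
  simp [emb2_apply, mul_ite, Finset.sum_ite_eq']


end EmbMul

/-- partial transpose in the first tensor factor -/
def pt1 [Ring A] (D : Matrix (Fin N × Fin N) (Fin N × Fin N) A) :
    Matrix (Fin N × Fin N) (Fin N × Fin N) A :=
  Matrix.of fun p q => D (q.1, p.2) (p.1, q.2)

section PT
variable [Ring A]

lemma pt1_apply (D : Matrix (Fin N × Fin N) (Fin N × Fin N) A) (p q) :
    pt1 D p q = D (q.1, p.2) (p.1, q.2) := rfl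

lemma pt1_sub (D E : Matrix (Fin N × Fin N) (Fin N × Fin N) A) :
    pt1 (D - E) = pt1 D - pt1 E := by
  ext p q; simp [pt1_apply, Matrix.sub_apply]

lemma pt1_map {B : Type*} [Ring B] (f : A → B)
    (D : Matrix (Fin N × Fin N) (Fin N × Fin N) A) :
    pt1 (D.map f) = (pt1 D).map f := rfl

lemma emb1_mul_emb2_apply (M M' : Matrix (Fin N) (Fin N) A) (p q) :
    (emb1 M * emb2 M') p q = M p.1 q.1 * M' p.2 q.2 := by
  rw [emb1_mul_apply]
  simp [emb2_apply, mul_ite, Finset.sum_ite_eq]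

lemma emb2_mul_emb1_apply (M' M : Matrix (Fin N) (Fin N) A) (p q) :
    (emb2 M' * emb1 M) p q = M' p.2 q.2 * M p.1 q.1 := by
  rw [emb2_mul_apply]
  simp [emb1_apply, mul_ite, Finset.sum_ite_eq]

lemma pt1_emb1_mul_emb2 (M M' : Matrix (Fin N) (Fin N) A) :
    pt1 (emb1 M * emb2 M') = emb1 Mᵀ * emb2 M' := by
  ext p q
  simp [pt1_apply, emb1_mul_emb2_apply, Matrix.transpose_apply]

lemma pt1_emb2_mul_emb1 (M' M : Matrix (Fin N) (Fin N) A) :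
    pt1 (emb2 M' * emb1 M) = emb2 M' * emb1 Mᵀ := by
  ext p q
  simp [pt1_apply, emb2_mul_emb1_apply, Matrix.transpose_apply]

lemma pt1_emb1_mul_central (M : Matrix (Fin N) (Fin N) A)
    (C : Matrix (Fin N × Fin N) (Fin N × Fin N) A)
    (hC : ∀ p q (x : A), C p q * x = x * C p q) :
    pt1 (emb1 M * C) = pt1 C * emb1 Mᵀ := by
  ext p q
  rw [pt1_apply, emb1_mul_apply, mul_emb1_apply]
  exact Finset.sum_congr rfl fun k _ => (hC _ _ _).symm

lemma pt1_central_mul_emb1 (M : Matrix (Fin N) (Fin N) A)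
    (C : Matrix (Fin N × Fin N) (Fin N × Fin N) A)
    (hC : ∀ p q (x : A), C p q * x = x * C p q) :
    pt1 (C * emb1 M) = emb1 Mᵀ * pt1 C := by
  ext p q
  rw [pt1_apply, mul_emb1_apply, emb1_mul_apply]
  exact Finset.sum_congr rfl fun k _ => (hC _ _ _)

lemma pt1_emb2_mul (M : Matrix (Fin N) (Fin N) A)
    (D : Matrix (Fin N × Fin N) (Fin N × Fin N) A) :
    pt1 (emb2 M * D) = emb2 M * pt1 D := by
  ext p q
  rw [pt1_apply, emb2_mul_apply, emb2_mul_apply]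
  rfl

lemma pt1_mul_emb2 (M : Matrix (Fin N) (Fin N) A)
    (D : Matrix (Fin N × Fin N) (Fin N × Fin N) A) :
    pt1 (D * emb2 M) = pt1 D * emb2 M := by
  ext p q
  rw [pt1_apply, mul_emb2_apply, mul_emb2_apply]
  rfl

lemma emb1_mul (M M' : Matrix (Fin N) (Fin N) A) :
    emb1 (M * M') = emb1 M * emb1 M' := by
  ext p q
  rw [emb1_mul_apply, emb1_apply, Matrix.mul_apply]
  simp [emb1_apply, mul_ite, Finset.sum_ite_eq]

lemma emb2_mul (M M' : Matrix (Fin N) (Fin N) A) :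
    emb2 (M * M') = emb2 M * emb2 M' := by
  ext p q
  rw [emb2_mul_apply, emb2_apply, Matrix.mul_apply]
  simp [emb2_apply, mul_ite, Finset.sum_ite_eq]

lemma emb1_one : emb1 (1 : Matrix (Fin N) (Fin N) A) = 1 := by
  ext p q
  simp only [emb1_apply, Matrix.one_apply, Prod.ext_iff]
  split_ifs with h1 h2 h3 <;> simp_all

lemma emb1_sub (M M' : Matrix (Fin N) (Fin N) A) :
    emb1 (M - M') = emb1 M - emb1 M' := by
  ext p q; simp only [emb1_apply, Matrix.sub_apply]; split <;> simp

lemma emb2_sub (M M' : Matrix (Fin N) (Fin N) A) :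
    emb2 (M - M') = emb2 M - emb2 M' := by
  ext p q; simp only [emb2_apply, Matrix.sub_apply]; split <;> simp

end PT

section SM
variable [Ring A] [Algebra ℂ A]

lemma pt1_smul (c : ℂ) (D : Matrix (Fin N × Fin N) (Fin N × Fin N) A) :
    pt1 (c • D) = c • pt1 D := by
  ext p q; simp [pt1_apply]

lemma emb1_smul (c : ℂ) (M : Matrix (Fin N) (Fin N) A) :
    emb1 (c • M) = c • emb1 M := by
  ext p q; simp only [emb1_apply, Matrix.smul_apply]; split <;> simp

lemma emb2_smul (c : ℂ) (M : Matrix (Fin N) (Fin N) A) :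
    emb2 (c • M) = c • emb2 M := by
  ext p q; simp only [emb2_apply, Matrix.smul_apply]; split <;> simp

end SM

section CLevel

lemma Pop_apply (p q : Fin N × Fin N) :
    Pop N p q = if p.1 = q.2 ∧ p.2 = q.1 then 1 else 0 := by
  simp only [Pop, Matrix.sum_apply, Matrix.kroneckerMap_apply, Matrix.single,
    Matrix.of_apply]
  simp [ite_and, Finset.sum_ite_eq, and_comm, eq_comm]

lemma Ptop_apply (p q : Fin N × Fin N) :
    Ptop N p q = if p.1 = p.2 ∧ q.1 = q.2 then 1 else 0 := by
  simp only [Ptop, Matrix.sum_apply, Matrix.kroneckerMap_apply, Matrix.single,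
    Matrix.of_apply]
  simp [ite_and, Finset.sum_ite_eq, and_comm, eq_comm]

lemma kron_one_eq_emb1 (M : Matrix (Fin N) (Fin N) ℂ) :
    M ⊗ₖ (1 : Matrix (Fin N) (Fin N) ℂ) = emb1 M := by
  ext p q
  simp [Matrix.kroneckerMap_apply, Matrix.one_apply, emb1_apply, mul_ite]

lemma Qop_eq (G : Matrix (Fin N) (Fin N) ℂ) :
    Qop N G = emb1 G * Ptop N * emb1 G⁻¹ := by
  rw [Qop, kron_one_eq_emb1, kron_one_eq_emb1]

lemma Qop_apply (G : Matrix (Fin N) (Fin N) ℂ) (p q : Fin N × Fin N) :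
    Qop N G p q = G p.1 p.2 * G⁻¹ q.2 q.1 := by
  rw [Qop_eq, Matrix.mul_assoc, emb1_mul_apply]
  simp only [mul_emb1_apply, Ptop_apply]
  simp [ite_and, ite_mul, Finset.sum_ite_eq, Finset.mul_sum, Finset.sum_ite_eq',
    mul_ite, mul_zero, zero_mul]

lemma pt1_Pop : pt1 (Pop N) = Ptop N := by
  ext p q
  simp only [pt1_apply, Pop_apply, Ptop_apply]
  split_ifs <;> first | rfl | tauto

lemma pt1_Ptop : pt1 (Ptop N) = Pop N := by
  ext p q
  simp only [pt1_apply, Pop_apply, Ptop_apply]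
  split_ifs <;> first | rfl | tauto

lemma Pop_mul_apply (D : Matrix (Fin N × Fin N) (Fin N × Fin N) ℂ) (p q) :
    (Pop N * D) p q = D (p.2, p.1) q := by
  rw [Matrix.mul_apply, Fintype.sum_prod_type]
  simp [Pop_apply, ite_and, ite_mul, Finset.sum_ite_eq, Finset.sum_ite_eq']

lemma mul_Pop_apply (D : Matrix (Fin N × Fin N) (Fin N × Fin N) ℂ) (p q) :
    (D * Pop N) p q = D p (q.2, q.1) := by
  rw [Matrix.mul_apply, Fintype.sum_prod_type]
  simp [Pop_apply, ite_and, mul_ite, Finset.sum_ite_eq, Finset.sum_ite_eq']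

lemma Pop_mul_Pop : Pop N * Pop N = 1 := by
  ext p q
  rw [Pop_mul_apply, Pop_apply, Matrix.one_apply]
  simp [Prod.ext_iff, and_comm, eq_comm]

lemma Pop_Qop_Pop (G : Matrix (Fin N) (Fin N) ℂ) (e : ℂ)
    (hGt : Gᵀ = e • G) (hGit : (G⁻¹)ᵀ = e • G⁻¹) (he2 : e * e = 1) :
    Pop N * Qop N G * Pop N = Qop N G := by
  ext p q
  rw [mul_Pop_apply, Pop_mul_apply, Qop_apply, Qop_apply]
  have h1 : G p.2 p.1 = e * G p.1 p.2 := by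
    have := congrFun (congrFun hGt p.1) p.2
    simpa [Matrix.transpose_apply] using this
  have h2 : G⁻¹ q.1 q.2 = e * G⁻¹ q.2 q.1 := by
    have := congrFun (congrFun hGit q.2) q.1
    simpa [Matrix.transpose_apply] using this
  rw [h1, h2]
  linear_combination (G p.1 p.2 * G⁻¹ q.2 q.1) * he2

lemma conj_pt1_Qop (G : Matrix (Fin N) (Fin N) ℂ) (e : ℂ)
    (hGG : G * G⁻¹ = 1) (hGt : Gᵀ = e • G) (hGit : (G⁻¹)ᵀ = e • G⁻¹) (he2 : e * e = 1) :
    emb1 G * pt1 (Qop N G) * emb1 G⁻¹ = Pop N := by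
  have hE : emb1 (A := ℂ) G * emb1 G⁻¹ = 1 := by rw [← emb1_mul, hGG, emb1_one]
  have h1 : pt1 (Qop N G) = emb1 (G⁻¹)ᵀ * pt1 (Ptop N) * emb1 Gᵀ := by
    rw [Qop_eq, Matrix.mul_assoc,
      pt1_emb1_mul_central _ _ (fun _ _ _ => mul_comm _ _),
      pt1_central_mul_emb1 _ _ (fun _ _ _ => mul_comm _ _)]
  rw [h1, pt1_Ptop, hGit, hGt, emb1_smul, emb1_smul]
  simp only [Matrix.smul_mul, Matrix.mul_smul, smul_smul, he2, one_smul]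
  have : emb1 (A := ℂ) G * (emb1 G⁻¹ * Pop N * emb1 G) * emb1 G⁻¹
       = (emb1 G * emb1 G⁻¹) * Pop N * (emb1 G * emb1 G⁻¹) := by noncomm_ring
  rw [this, hE, one_mul, mul_one]

end CLevel

section ALevel
variable [Ring A] [Algebra ℂ A]

/-- conjugation by a unit as a ring homomorphism -/
def conjHom {R : Type*} [Ring R] (u : Rˣ) : R →+* R where
  toFun z := ↑u * z * ↑u⁻¹
  map_one' := by simp
  map_mul' a b := by
    simp only [mul_assoc]
    rw [Units.inv_mul_cancel_left]
  map_zero' := by simp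
  map_add' a b := by noncomm_ring

lemma conjHom_apply {R : Type*} [Ring R] (u : Rˣ) (z : R) :
    conjHom u z = ↑u * z * ↑u⁻¹ := rfl

lemma conjHom_smul {R : Type*} [Ring R] [Algebra ℂ R] (u : Rˣ) (c : ℂ) (z : R) :
    conjHom u (c • z) = c • conjHom u z := by
  simp [conjHom_apply, smul_mul_assoc, mul_smul_comm]

lemma emb1_map (Mc : Matrix (Fin N) (Fin N) ℂ) :
    emb1 (Mc.map (algebraMap ℂ A)) = (emb1 Mc).map (algebraMap ℂ A) := by
  ext p q
  simp only [emb1_apply, Matrix.map_apply]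
  split <;> simp

lemma pm_mul_emb1 (M : Matrix (Fin N) (Fin N) A) :
    (Pop N).map (algebraMap ℂ A) * emb1 M = emb2 M * (Pop N).map (algebraMap ℂ A) := by
  ext p q
  rw [mul_emb1_apply, emb2_mul_apply]
  simp [Matrix.map_apply, Pop_apply, apply_ite, ite_and, ite_mul, mul_ite,
    Finset.sum_ite_eq, Finset.sum_ite_eq']
  split_ifs <;> simp_all

lemma pm_mul_emb2 (M : Matrix (Fin N) (Fin N) A) :
    (Pop N).map (algebraMap ℂ A) * emb2 M = emb1 M * (Pop N).map (algebraMap ℂ A) := by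
  ext p q
  rw [mul_emb2_apply, emb1_mul_apply]
  simp [Matrix.map_apply, Pop_apply, apply_ite, ite_and, ite_mul, mul_ite,
    Finset.sum_ite_eq, Finset.sum_ite_eq']
  split_ifs <;> simp_all

lemma emb1C_comm_emb2 (Mc : Matrix (Fin N) (Fin N) ℂ) (M : Matrix (Fin N) (Fin N) A) :
    emb1 (Mc.map (algebraMap ℂ A)) * emb2 M = emb2 M * emb1 (Mc.map (algebraMap ℂ A)) := by
  ext p q
  rw [emb1_mul_apply, mul_emb1_apply]
  simp [emb2_apply, Matrix.map_apply, mul_ite, ite_mul, Finset.sum_ite_eq,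
    Finset.sum_ite_eq', Algebra.commutes]

lemma transpose_mapC_mul (Mc : Matrix (Fin N) (Fin N) ℂ) (D : Matrix (Fin N) (Fin N) A) :
    ((Mc.map (algebraMap ℂ A)) * D)ᵀ = Dᵀ * (Mcᵀ.map (algebraMap ℂ A)) := by
  ext i j
  rw [Matrix.transpose_apply, Matrix.mul_apply, Matrix.mul_apply]
  refine Finset.sum_congr rfl fun k _ => ?_
  simp [Matrix.map_apply, Algebra.commutes]

lemma transpose_mul_mapC (Mc : Matrix (Fin N) (Fin N) ℂ) (D : Matrix (Fin N) (Fin N) A) :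
    (D * (Mc.map (algebraMap ℂ A)))ᵀ = (Mcᵀ.map (algebraMap ℂ A)) * Dᵀ := by
  ext i j
  rw [Matrix.transpose_apply, Matrix.mul_apply, Matrix.mul_apply]
  refine Finset.sum_congr rfl fun k _ => ?_
  simp [Matrix.map_apply, Algebra.commutes]

lemma mapC_smul (c : ℂ) (Mc : Matrix (Fin N) (Fin N) ℂ) :
    ((c • Mc).map (algebraMap ℂ A)) = c • (Mc.map (algebraMap ℂ A)) := by
  ext i j
  show (algebraMap ℂ A) ((c • Mc) i j) = c • ((algebraMap ℂ A) (Mc i j))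
  rw [Matrix.smul_apply, smul_eq_mul, _root_.map_mul, Algebra.smul_def]

end ALevel

end AuxiliaryLemmasForProof

/-- In the reflection algebra `B(𝔤_N)`, the degree-`(1,1)` coefficient of the reflection
equation yields the relation `S₁S₂ - S₂S₁ = 2S₁(P - Q) - 2(P - Q)S₁` for the matrix
`S = [s_{ij}^{(1)}]` of first-order generators.  Consequently the assignment
`F_{ij} ↦ (1/4)(s_{ij}^{(1)} - s'^{(1)}_{ij})`, i.e. `F ↦ (1/4)(S - S')` with
`S' = G Sᵀ G⁻¹`, defines an algebra homomorphism `U(𝔤_N) → B(𝔤_N)`: the image matrix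
satisfies the defining relations `F₁F₂ - F₂F₁ = F₁(P-Q) - (P-Q)F₁` and `F + F' = 0`
of `U(𝔤_N)`. -/
theorem embedding_U_in_reflection_algebra [Ring A] [Algebra ℂ A]
    (G : Matrix (Fin N) (Fin N) ℂ) (hG : IsUnit G.det)
    (e : ℂ) (he : (e = 1 ∧ Gᵀ = G) ∨ (e = -1 ∧ Gᵀ = -G))
    (S : Matrix (Fin N) (Fin N) A)
    (hrel : emb1 S * emb2 S - emb2 S * emb1 S =
      (2 : ℂ) • (emb1 S * ((Pop N).map (algebraMap ℂ A) - (Qop N G).map (algebraMap ℂ A))) -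
      (2 : ℂ) • (((Pop N).map (algebraMap ℂ A) - (Qop N G).map (algebraMap ℂ A)) * emb1 S)) :
    let S' := G.map (algebraMap ℂ A) * Sᵀ * (G⁻¹).map (algebraMap ℂ A)
    let Fb : Matrix (Fin N) (Fin N) A := (4 : ℂ)⁻¹ • (S - S')
    (emb1 Fb * emb2 Fb - emb2 Fb * emb1 Fb =
      emb1 Fb * ((Pop N).map (algebraMap ℂ A) - (Qop N G).map (algebraMap ℂ A)) -
      ((Pop N).map (algebraMap ℂ A) - (Qop N G).map (algebraMap ℂ A)) * emb1 Fb) ∧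
    Fb + G.map (algebraMap ℂ A) * Fbᵀ * (G⁻¹).map (algebraMap ℂ A) = 0 := by
  intro S' Fb
  -- complex-level facts about G
  have hGG : G * G⁻¹ = 1 := G.mul_nonsing_inv hG
  have hGG' : G⁻¹ * G = 1 := G.nonsing_inv_mul hG
  have hGt : Gᵀ = e • G := by
    rcases he with ⟨h1, h2⟩ | ⟨h1, h2⟩ <;> simp [h1, h2]
  have hGit : (G⁻¹)ᵀ = e • G⁻¹ := by
    rw [Matrix.transpose_nonsing_inv]
    rcases he with ⟨h1, h2⟩ | ⟨h1, h2⟩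
    · simp [h1, h2]
    · rw [h2, h1]
      have : (-G)⁻¹ = -G⁻¹ := Matrix.inv_eq_right_inv (by rw [neg_mul_neg, hGG])
      rw [this]; simp
  have he2 : e * e = 1 := by
    rcases he with ⟨h1, _⟩ | ⟨h1, _⟩ <;> rw [h1] <;> norm_num
  -- notation
  set Pm := (Pop N).map (algebraMap ℂ A) with hPm
  set Qm := (Qop N G).map (algebraMap ℂ A) with hQm
  set Gm := G.map (algebraMap ℂ A) with hGm
  set Gm' := (G⁻¹).map (algebraMap ℂ A) with hGm'
  set Δ := Pm - Qm with hΔ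
  set Pt := (Ptop N).map (algebraMap ℂ A) with hPt
  set Qt := (pt1 (Qop N G)).map (algebraMap ℂ A) with hQt
  set X := emb1 S with hX
  set Y := emb2 S with hY
  set Xt := emb1 Sᵀ with hXt
  set T := emb1 S' with hT
  set U := emb2 S' with hU
  -- A-level matrix facts
  have hGmGm' : Gm * Gm' = 1 := by
    rw [hGm, hGm', ← Matrix.map_mul, hGG, Matrix.map_one _ (map_zero _) (map_one _)]
  have hGm'Gm : Gm' * Gm = 1 := by
    rw [hGm, hGm', ← Matrix.map_mul, hGG', Matrix.map_one _ (map_zero _) (map_one _)]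
  have hΓΓ' : emb1 Gm * emb1 Gm' = 1 := by rw [← emb1_mul, hGmGm', emb1_one]
  have hΓ'Γ : emb1 Gm' * emb1 Gm = 1 := by rw [← emb1_mul, hGm'Gm, emb1_one]
  have hPP : Pm * Pm = 1 := by
    rw [hPm, ← Matrix.map_mul, Pop_mul_Pop, Matrix.map_one _ (map_zero _) (map_one _)]
  let γ : (Matrix (Fin N × Fin N) (Fin N × Fin N) A)ˣ := ⟨emb1 Gm, emb1 Gm', hΓΓ', hΓ'Γ⟩
  let π : (Matrix (Fin N × Fin N) (Fin N × Fin N) A)ˣ := ⟨Pm, Pm, hPP, hPP⟩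
  -- conjugation facts
  have cγY : conjHom γ Y = Y := by
    show emb1 Gm * Y * emb1 Gm' = Y
    rw [hY, hGm, emb1C_comm_emb2, ← hGm, mul_assoc, hΓΓ', mul_one]
  have cγU : conjHom γ U = U := by
    show emb1 Gm * U * emb1 Gm' = U
    rw [hU, hGm, emb1C_comm_emb2, ← hGm, mul_assoc, hΓΓ', mul_one]
  have cγXt : conjHom γ Xt = T := by
    show emb1 Gm * Xt * emb1 Gm' = T
    rw [hXt, hT, ← emb1_mul, ← emb1_mul]
  have cγPt : conjHom γ Pt = Qm := by
    show emb1 Gm * Pt * emb1 Gm' = Qm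
    rw [hGm, hGm', hPt, hQm, emb1_map, emb1_map, ← Matrix.map_mul, ← Matrix.map_mul,
      Qop_eq]
  have cγQt : conjHom γ Qt = Pm := by
    show emb1 Gm * Qt * emb1 Gm' = Pm
    rw [hGm, hGm', hQt, hPm, emb1_map, emb1_map, ← Matrix.map_mul, ← Matrix.map_mul,
      conj_pt1_Qop G e hGG hGt hGit he2]
  have cπX : conjHom π X = Y := by
    show Pm * X * Pm = Y
    rw [hX, hY, pm_mul_emb1, mul_assoc, hPP, mul_one]
  have cπY : conjHom π Y = X := by
    show Pm * Y * Pm = X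
    rw [hX, hY, pm_mul_emb2, mul_assoc, hPP, mul_one]
  have cπT : conjHom π T = U := by
    show Pm * T * Pm = U
    rw [hT, hU, pm_mul_emb1, mul_assoc, hPP, mul_one]
  have cπU : conjHom π U = T := by
    show Pm * U * Pm = T
    rw [hT, hU, pm_mul_emb2, mul_assoc, hPP, mul_one]
  have cπPm : conjHom π Pm = Pm := by
    show Pm * Pm * Pm = Pm
    rw [hPP, one_mul]
  have cπQm : conjHom π Qm = Qm := by
    show Pm * Qm * Pm = Qm
    rw [hPm, hQm, ← Matrix.map_mul, ← Matrix.map_mul, Pop_Qop_Pop G e hGt hGit he2]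
  -- centrality of scalar matrices
  have hΔc : ∀ p q (x : A), Δ p q * x = x * Δ p q := by
    intro p q x
    simp only [hΔ, hPm, hQm, Matrix.sub_apply, sub_mul, mul_sub, Matrix.map_apply,
      Algebra.commutes]
  have hΔc' : ∀ p q (x : A), (Qm - Pm) p q * x = x * (Qm - Pm) p q := by
    intro p q x
    simp only [hPm, hQm, Matrix.sub_apply, sub_mul, mul_sub, Matrix.map_apply,
      Algebra.commutes]
  have hpt1Δ : pt1 Δ = Pt - Qt := by
    rw [hΔ, pt1_sub, hPm, hQm, pt1_map, pt1_Pop, hPt, hQt, pt1_map]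
  have hpt1Δ' : pt1 (Qm - Pm) = Qt - Pt := by
    rw [pt1_sub, pt1_map, pt1_map, pt1_Pop]
  have hpt1PmQm : pt1 (Pm - Qm) = Pt - Qt := by
    rw [pt1_sub, pt1_map, pt1_map, pt1_Pop]
  have h1 : pt1 (X * Δ) = (Pt - Qt) * Xt := by
    rw [hX, hXt, pt1_emb1_mul_central _ _ hΔc, hpt1Δ]
  have h2 : pt1 (Δ * X) = Xt * (Pt - Qt) := by
    rw [hX, hXt, pt1_central_mul_emb1 _ _ hΔc, hpt1Δ]
  have h3 : pt1 (X * (Qm - Pm)) = (Qt - Pt) * Xt := by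
    rw [hX, hXt, pt1_emb1_mul_central _ _ hΔc', hpt1Δ']
  have h4 : pt1 ((Qm - Pm) * X) = Xt * (Qt - Pt) := by
    rw [hX, hXt, pt1_central_mul_emb1 _ _ hΔc', hpt1Δ']
  -- step 1 : partial transpose of the defining relation
  have hA := congrArg pt1 hrel
  rw [pt1_sub, pt1_sub, pt1_smul, pt1_smul, h1, h2, hX, hY, pt1_emb1_mul_emb2,
    pt1_emb2_mul_emb1, ← hXt, ← hY] at hA
  -- step 2 : conjugate by G₁ to get relation for T
  have hB := congrArg (conjHom γ) hA
  simp only [map_sub, _root_.map_mul, conjHom_smul, cγXt, cγY, cγPt, cγQt] at hB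
  -- step 3 : conjugate original relation by P
  have hC := congrArg (conjHom π) hrel
  simp only [map_sub, _root_.map_mul, conjHom_smul, cπX, cπY, hΔ, cπPm, cπQm] at hC
  -- step 4 : partial transpose of hC, conjugated by G₁
  have hB' := congrArg pt1 hC
  rw [pt1_sub, pt1_sub, pt1_smul, pt1_smul, hX, hY, pt1_emb2_mul_emb1,
    pt1_emb1_mul_emb2, pt1_emb2_mul, pt1_mul_emb2, hpt1PmQm, ← hXt, ← hY] at hB'
  have hB'' := congrArg (conjHom γ) hB'
  simp only [map_sub, _root_.map_mul, conjHom_smul, cγXt, cγY, cγPt, cγQt] at hB''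
  -- step 5 : conjugate by P to get relation between X and U
  have hD := congrArg (conjHom π) hB''
  simp only [map_sub, _root_.map_mul, conjHom_smul, cπY, cπT, cπPm, cπQm] at hD
  -- step 6 : partial transpose of hD, conjugated by G₁, to get relation between T and U
  have hE' := congrArg pt1 hD
  rw [pt1_sub, pt1_sub, pt1_smul, pt1_smul, h3, h4, hX, hU, pt1_emb1_mul_emb2,
    pt1_emb2_mul_emb1, ← hXt, ← hU] at hE'
  have hE := congrArg (conjHom γ) hE'
  simp only [map_sub, _root_.map_mul, conjHom_smul, cγXt, cγU, cγPt, cγQt] at hE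
  -- the key combined relation
  have key : (X - T) * (Y - U) - (Y - U) * (X - T) =
      (4 : ℂ) • ((X - T) * Δ - Δ * (X - T)) := by
    have expand : (X - T) * (Y - U) - (Y - U) * (X - T) =
        (X * Y - Y * X) - (T * Y - Y * T) - (X * U - U * X) + (T * U - U * T) := by
      noncomm_ring
    rw [expand, hrel, hB, hD, hE, hΔ]
    simp only [mul_sub, sub_mul, smul_sub]
    module
  have hFb : Fb = (4 : ℂ)⁻¹ • (S - S') := rfl
  have hem1 : emb1 Fb = (4 : ℂ)⁻¹ • (X - T) := by
    rw [hFb, emb1_smul, emb1_sub, hX, hT]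
  have hem2 : emb2 Fb = (4 : ℂ)⁻¹ • (Y - U) := by
    rw [hFb, emb2_smul, emb2_sub, hY, hU]
  constructor
  · rw [hem1, hem2]
    simp only [smul_mul_assoc, mul_smul_comm, smul_smul]
    rw [← smul_sub, ← smul_sub, key, smul_smul]
    norm_num
  · -- F + G Fᵀ G⁻¹ = 0
    have hFbt : Fbᵀ = (4 : ℂ)⁻¹ • (Sᵀ - S'ᵀ) := by
      rw [hFb, Matrix.transpose_smul, Matrix.transpose_sub]
    have hS't : S'ᵀ = e • Gm' * (S * e • Gm) := by
      show (Gm * Sᵀ * Gm')ᵀ = _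
      rw [hGm', transpose_mul_mapC, hGm, transpose_mapC_mul, Matrix.transpose_transpose,
        hGit, hGt, mapC_smul, mapC_smul, ← hGm, ← hGm']
    have hmid : Gm * (e • Gm' * (S * e • Gm)) * Gm' = S := by
      have h6 : Gm * (e • Gm' * (S * e • Gm)) * Gm' =
          (e * e) • (Gm * (Gm' * (S * Gm)) * Gm') := by
        simp only [smul_mul_assoc, mul_smul_comm, smul_smul]
      have h7 : Gm * (Gm' * (S * Gm)) * Gm' = (Gm * Gm') * S * (Gm * Gm') := by
        noncomm_ring
      rw [h6, h7, hGmGm', he2, one_smul, one_mul, mul_one]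
    have h5 : Gm * Fbᵀ * Gm' = (4 : ℂ)⁻¹ • (S' - S) := by
      rw [hFbt, hS't, mul_smul_comm, smul_mul_assoc, mul_sub, sub_mul, hmid]
    rw [hFb, h5, ← smul_add]
    simp

end
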